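/- Let X ⊆ ℝⁿ be a polyhedral set and ψ(x) = max_{1≤i≤k₁} ψ₁ᵢ(x) − max_{1≤j≤k₂} ψ₂ⱼ(x), where each ψ₁ᵢ is a concave quadratic function, each ψ₂ⱼ is a strictly convex quadratic function, and at every d-stationary point x̄ ∈ D_{(ψ,X)} the gradients { ∇ψ₁ᵢ(x̄) : i ∈ argmax_{1≤i≤k₁} ψ₁ᵢ(x̄) } are linearly independent. Then the set D_{(ψ,X)} of d-stationary points of ψ on X is finite. -/

import Mathlib

open Matrix Filter Topology

noncomputable def finMax {k : ℕ} (hk : 0 < k) (g : Fin k → ℝ) : ℝ :=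
  Finset.univ.sup' (Finset.univ_nonempty_iff.mpr ⟨⟨0, hk⟩⟩) g

/-- The one-sided directional derivative of `ψ` at `x` in direction `v` equals `L`. -/
def HasDirDeriv {n : ℕ} (ψ : (Fin n → ℝ) → ℝ) (x v : Fin n → ℝ) (L : ℝ) : Prop :=
  Filter.Tendsto (fun δ : ℝ => (ψ (x + δ • v) - ψ x) / δ) (nhdsWithin 0 (Set.Ioi 0)) (nhds L)

/-- `x₀` is a d(irectional)-stationary point of `ψ` on `X`. -/
def DStat {n : ℕ} (ψ : (Fin n → ℝ) → ℝ) (X : Set (Fin n → ℝ)) (x₀ : Fin n → ℝ) : Prop :=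
  x₀ ∈ X ∧ ∀ x ∈ X, ∃ L, HasDirDeriv ψ x₀ (x - x₀) L ∧ 0 ≤ L


/-- A polyhedral subset of ℝⁿ: solution set of finitely many linear inequalities. -/
def IsPolyhedral {n : ℕ} (X : Set (Fin n → ℝ)) : Prop :=
  ∃ (m : ℕ) (A : Fin m → Fin n → ℝ) (b : Fin m → ℝ), X = {x | ∀ i, A i ⬝ᵥ x ≤ b i}


set_option linter.unusedVariables false

private lemma dot_symm {n : ℕ} {Q : Matrix (Fin n) (Fin n) ℝ} (hQ : Qᵀ = Q) (x v : Fin n → ℝ) :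
    x ⬝ᵥ Q *ᵥ v = (Q *ᵥ x) ⬝ᵥ v := by
  rw [Matrix.dotProduct_mulVec]
  congr 1
  conv_lhs => rw [← hQ]
  rw [Matrix.vecMul_transpose]

private lemma quad_expand {n : ℕ} {Q : Matrix (Fin n) (Fin n) ℝ} (hQ : Qᵀ = Q)
    (q : Fin n → ℝ) (α : ℝ) (x v : Fin n → ℝ) (δ : ℝ) :
    (1/2) * ((x + δ • v) ⬝ᵥ Q *ᵥ (x + δ • v)) + q ⬝ᵥ (x + δ • v) + α
      = ((1/2) * (x ⬝ᵥ Q *ᵥ x) + q ⬝ᵥ x + α) + δ * ((Q *ᵥ x + q) ⬝ᵥ v)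
        + δ^2 * ((1/2) * (v ⬝ᵥ Q *ᵥ v)) := by
  have h1 : x ⬝ᵥ Q *ᵥ v = (Q *ᵥ x) ⬝ᵥ v := dot_symm hQ x v
  have h2 : v ⬝ᵥ Q *ᵥ x = (Q *ᵥ x) ⬝ᵥ v := dotProduct_comm _ _
  simp only [Matrix.mulVec_add, Matrix.mulVec_smul, dotProduct_add, add_dotProduct,
    dotProduct_smul, smul_dotProduct, smul_eq_mul, h1, h2]
  ring

private lemma sup'_affine {ι : Type*} (s : Finset ι) (hs : s.Nonempty) (c e : ℝ) (he : 0 ≤ e)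
    (f : ι → ℝ) : s.sup' hs (fun i => c + e * f i) = c + e * s.sup' hs f := by
  have := Finset.comp_sup'_eq_sup'_comp hs (f := f) (fun t : ℝ => c + e * t)
    (fun a b => by show c + e * (a ⊔ b) = (c + e * a) ⊔ (c + e * b)
                   rw [mul_max_of_nonneg _ _ he, max_add_add_left])
  exact this.symm

private lemma tendsto_sup' {ι : Type*} {s : Finset ι} (hs : s.Nonempty) {f : ι → ℝ → ℝ}
    {L : ι → ℝ} {l : Filter ℝ} (h : ∀ i, Tendsto (f i) l (𝓝 (L i))) :
    Tendsto (fun δ => s.sup' hs (fun i => f i δ)) l (𝓝 (s.sup' hs L)) := by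
  induction hs using Finset.Nonempty.cons_induction with
  | singleton i => simpa using h i
  | cons i s hi hs ih =>
    have e1 : ∀ (g : ι → ℝ), (Finset.cons i s hi).sup' (Finset.cons_nonempty hi) g
        = g i ⊔ s.sup' hs g := fun g => Finset.sup'_cons hs g
    simp only [e1]
    exact (h i).max ih

private lemma maxQuad_dirDeriv {n k : ℕ} (hk : 0 < k)
    (Q : Fin k → Matrix (Fin n) (Fin n) ℝ) (hQ : ∀ i, (Q i)ᵀ = Q i)
    (q : Fin k → Fin n → ℝ) (α : Fin k → ℝ)
    (f : Fin k → (Fin n → ℝ) → ℝ)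
    (hf : ∀ i x, f i x = (1/2) * (x ⬝ᵥ (Q i).mulVec x) + q i ⬝ᵥ x + α i)
    (x v : Fin n → ℝ) {s : Finset (Fin k)} (hs : s.Nonempty)
    (hmem : ∀ i, i ∈ s ↔ ∀ j, f j x ≤ f i x) :
    Tendsto (fun δ : ℝ => (finMax hk (fun i => f i (x + δ • v)) - finMax hk (fun i => f i x)) / δ)
      (𝓝[>] (0:ℝ)) (𝓝 (s.sup' hs (fun i => ((Q i) *ᵥ x + q i) ⬝ᵥ v))) := by
  set L : Fin k → ℝ := fun i => ((Q i) *ᵥ x + q i) ⬝ᵥ v with hLdef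
  set C : Fin k → ℝ := fun i => (1/2) * (v ⬝ᵥ (Q i) *ᵥ v) with hCdef
  have hexp : ∀ i (δ : ℝ), f i (x + δ • v) = f i x + δ * L i + δ^2 * C i := by
    intro i δ
    rw [hf, hf]
    exact quad_expand (hQ i) (q i) (α i) x v δ
  set M : ℝ := finMax hk (fun i => f i x) with hM
  have hMs : ∀ i ∈ s, f i x = M := by
    intro i hi
    have hi' := (hmem i).1 hi
    simp only [hM, finMax]
    exact le_antisymm (Finset.le_sup' (fun j => f j x) (Finset.mem_univ i))
      (Finset.sup'_le _ _ fun j _ => hi' j)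
  obtain ⟨i₀, hi₀⟩ := hs
  have hev : ∀ᶠ δ in 𝓝[>] (0:ℝ), ∀ j, f j (x + δ • v) ≤ s.sup' ⟨i₀, hi₀⟩ (fun i => f i (x + δ • v)) := by
    rw [Filter.eventually_all]
    intro j
    by_cases hjs : j ∈ s
    · exact Filter.Eventually.of_forall fun δ =>
        Finset.le_sup' (fun i => f i (x + δ • v)) hjs
    · have hjlt : f j x < M := by
        have hnot := (hmem j).not.1 hjs
        push_neg at hnot
        obtain ⟨i, hi⟩ := hnot
        simp only [hM, finMax]
        exact lt_of_lt_of_le hi (Finset.le_sup' (fun j => f j x) (Finset.mem_univ i))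
      have h1 : Tendsto (fun δ : ℝ => f j (x + δ • v)) (𝓝[>] (0:ℝ)) (𝓝 (f j x)) := by
        simp only [hexp]
        have hc : Continuous fun δ : ℝ => f j x + δ * L j + δ^2 * C j :=
          ((continuous_const.add (continuous_id.mul continuous_const)).add
            ((continuous_pow 2).mul continuous_const))
        have := (hc.tendsto 0).mono_left (nhdsWithin_le_nhds (s := Set.Ioi (0:ℝ)))
        simpa using this
      have h2 : Tendsto (fun δ : ℝ => f i₀ (x + δ • v)) (𝓝[>] (0:ℝ)) (𝓝 M) := by
        simp only [hexp]
        have hc : Continuous fun δ : ℝ => f i₀ x + δ * L i₀ + δ^2 * C i₀ :=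
          ((continuous_const.add (continuous_id.mul continuous_const)).add
            ((continuous_pow 2).mul continuous_const))
        have := (hc.tendsto 0).mono_left (nhdsWithin_le_nhds (s := Set.Ioi (0:ℝ)))
        simpa [hMs i₀ hi₀] using this
      have h3 : ∀ᶠ δ in 𝓝[>] (0:ℝ), f j (x + δ • v) < f i₀ (x + δ • v) :=
        h1.eventually_lt h2 hjlt
      filter_upwards [h3] with δ hδ
      exact le_trans (le_of_lt hδ) (Finset.le_sup' (fun i => f i (x + δ • v)) hi₀)
  have hquot : ∀ᶠ δ in 𝓝[>] (0:ℝ),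
      (finMax hk (fun i => f i (x + δ • v)) - M) / δ
        = s.sup' ⟨i₀, hi₀⟩ (fun i => L i + δ * C i) := by
    filter_upwards [hev, self_mem_nhdsWithin] with δ hδ hδpos
    have hδ0 : (0:ℝ) < δ := hδpos
    have hFeq : finMax hk (fun i => f i (x + δ • v))
        = s.sup' ⟨i₀, hi₀⟩ (fun i => f i (x + δ • v)) := by
      refine le_antisymm ?_ (Finset.sup'_le _ _ fun i _ => ?_)
      · exact Finset.sup'_le _ _ fun j _ => hδ j
      · simp only [finMax]
        exact Finset.le_sup' (fun i => f i (x + δ • v)) (Finset.mem_univ i)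
    rw [hFeq]
    have e2 : s.sup' ⟨i₀, hi₀⟩ (fun i => f i (x + δ • v))
        = s.sup' ⟨i₀, hi₀⟩ (fun i => M + δ * (L i + δ * C i)) := by
      refine Finset.sup'_congr _ rfl fun i hi => ?_
      rw [hexp, hMs i hi]; ring
    rw [e2, sup'_affine s ⟨i₀, hi₀⟩ M δ (le_of_lt hδ0) _, add_sub_cancel_left,
      mul_div_cancel_left₀ _ (ne_of_gt hδ0)]
  have hlim : Tendsto (fun δ : ℝ => s.sup' ⟨i₀, hi₀⟩ (fun i => L i + δ * C i))
      (𝓝[>] (0:ℝ)) (𝓝 (s.sup' ⟨i₀, hi₀⟩ L)) := by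
    refine tendsto_sup' _ fun i => ?_
    have hc : Continuous fun δ : ℝ => L i + δ * C i :=
      continuous_const.add (continuous_id.mul continuous_const)
    have := (hc.tendsto 0).mono_left (nhdsWithin_le_nhds (s := Set.Ioi (0:ℝ)))
    simpa using this
  exact Filter.Tendsto.congr' (Filter.EventuallyEq.symm hquot) hlim

/-- Proposition 9(b): for `ψ = max_i ψ₁ᵢ - max_j ψ₂ⱼ` with the `ψ₁ᵢ` concave quadratic,
the `ψ₂ⱼ` strictly convex quadratic, and the gradients of the active pieces of the first
max linearly independent at every d-stationary point, the set `D_{(ψ,X)}` of d-stationary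
points of `ψ` on a polyhedral set `X` is finite. -/
theorem stmt_13 {n k₁ k₂ : ℕ} (hk₁ : 0 < k₁) (hk₂ : 0 < k₂)
    (X : Set (Fin n → ℝ)) (hX : IsPolyhedral X)
    (Q₁ : Fin k₁ → Matrix (Fin n) (Fin n) ℝ) (q₁ : Fin k₁ → Fin n → ℝ) (α₁ : Fin k₁ → ℝ)
    (hQ₁ : ∀ i, (-(Q₁ i)).PosSemidef)
    (Q₂ : Fin k₂ → Matrix (Fin n) (Fin n) ℝ) (q₂ : Fin k₂ → Fin n → ℝ) (α₂ : Fin k₂ → ℝ)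
    (hQ₂ : ∀ j, (Q₂ j).PosDef)
    (ψ₁ : Fin k₁ → (Fin n → ℝ) → ℝ)
    (hψ₁ : ∀ i x, ψ₁ i x = (1/2) * (x ⬝ᵥ (Q₁ i).mulVec x) + q₁ i ⬝ᵥ x + α₁ i)
    (ψ₂ : Fin k₂ → (Fin n → ℝ) → ℝ)
    (hψ₂ : ∀ j x, ψ₂ j x = (1/2) * (x ⬝ᵥ (Q₂ j).mulVec x) + q₂ j ⬝ᵥ x + α₂ j)
    (ψ : (Fin n → ℝ) → ℝ)
    (hψ : ∀ x, ψ x = finMax hk₁ (fun i => ψ₁ i x) - finMax hk₂ (fun j => ψ₂ j x))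
    (hLI : ∀ x₀, DStat ψ X x₀ →
      LinearIndependent ℝ
        (fun i : {i : Fin k₁ // ∀ j, ψ₁ j x₀ ≤ ψ₁ i x₀} =>
          (Q₁ i.1).mulVec x₀ + q₁ i.1)) :
    {x | DStat ψ X x}.Finite := by
  classical
  obtain ⟨m, Amat, b, hXeq⟩ := hX
  have hQ₁t : ∀ i, (Q₁ i)ᵀ = Q₁ i := fun i => by
    have h2 : (Q₁ i).IsHermitian := by simpa using (hQ₁ i).1.neg
    simpa [Matrix.IsHermitian, Matrix.conjTranspose_eq_transpose_of_trivial] using h2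
  have hQ₂t : ∀ j, (Q₂ j)ᵀ = Q₂ j := fun j => by
    have h2 := (hQ₂ j).1
    simpa [Matrix.IsHermitian, Matrix.conjTranspose_eq_transpose_of_trivial] using h2
  have hC₁neg : ∀ i (d : Fin n → ℝ), d ⬝ᵥ Q₁ i *ᵥ d ≤ 0 := by
    intro i d
    have := (hQ₁ i).dotProduct_mulVec_nonneg d
    simp [Matrix.neg_mulVec] at this
    linarith [this]
  set act₁ : (Fin n → ℝ) → Finset (Fin k₁) :=
    fun x => Finset.univ.filter (fun i => ∀ j, ψ₁ j x ≤ ψ₁ i x) with hact₁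
  set act₂ : (Fin n → ℝ) → Finset (Fin k₂) :=
    fun x => Finset.univ.filter (fun j => ∀ j', ψ₂ j' x ≤ ψ₂ j x) with hact₂
  set actC : (Fin n → ℝ) → Finset (Fin m) :=
    fun x => Finset.univ.filter (fun l => Amat l ⬝ᵥ x = b l) with hactC
  have hmem₁ : ∀ x i, i ∈ act₁ x ↔ ∀ j, ψ₁ j x ≤ ψ₁ i x := by
    intro x i; simp [hact₁]
  have hmem₂ : ∀ x j, j ∈ act₂ x ↔ ∀ j', ψ₂ j' x ≤ ψ₂ j x := by
    intro x j; simp [hact₂]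
  have hne₁ : ∀ x, (act₁ x).Nonempty := by
    intro x
    obtain ⟨i, _, hi⟩ := Finset.exists_max_image Finset.univ (fun i => ψ₁ i x)
      ⟨⟨0, hk₁⟩, Finset.mem_univ _⟩
    exact ⟨i, (hmem₁ x i).2 fun j => hi j (Finset.mem_univ j)⟩
  have hne₂ : ∀ x, (act₂ x).Nonempty := by
    intro x
    obtain ⟨j, _, hj⟩ := Finset.exists_max_image Finset.univ (fun j => ψ₂ j x)
      ⟨⟨0, hk₂⟩, Finset.mem_univ _⟩
    exact ⟨j, (hmem₂ x j).2 fun j' => hj j' (Finset.mem_univ j')⟩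
  -- key: at any d-stationary point, for every feasible z and active j, some active i
  -- has at least as large a directional derivative
  have key : ∀ x₀, DStat ψ X x₀ → ∀ z ∈ X, ∀ j ∈ act₂ x₀,
      ∃ i ∈ act₁ x₀,
        ((Q₂ j) *ᵥ x₀ + q₂ j) ⬝ᵥ (z - x₀) ≤ ((Q₁ i) *ᵥ x₀ + q₁ i) ⬝ᵥ (z - x₀) := by
    intro x₀ hst z hz j hj
    obtain ⟨L, hL, hL0⟩ := hst.2 z hz
    have h1 := maxQuad_dirDeriv hk₁ Q₁ hQ₁t q₁ α₁ ψ₁ hψ₁ x₀ (z - x₀) (hne₁ x₀) (hmem₁ x₀)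
    have h2 := maxQuad_dirDeriv hk₂ Q₂ hQ₂t q₂ α₂ ψ₂ hψ₂ x₀ (z - x₀) (hne₂ x₀) (hmem₂ x₀)
    have hD : HasDirDeriv ψ x₀ (z - x₀)
        ((act₁ x₀).sup' (hne₁ x₀) (fun i => ((Q₁ i) *ᵥ x₀ + q₁ i) ⬝ᵥ (z - x₀))
          - (act₂ x₀).sup' (hne₂ x₀) (fun j => ((Q₂ j) *ᵥ x₀ + q₂ j) ⬝ᵥ (z - x₀))) := by
      have heq : (fun δ : ℝ => (ψ (x₀ + δ • (z - x₀)) - ψ x₀) / δ)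
          = fun δ : ℝ =>
            (finMax hk₁ (fun i => ψ₁ i (x₀ + δ • (z - x₀))) - finMax hk₁ (fun i => ψ₁ i x₀)) / δ
            - (finMax hk₂ (fun j => ψ₂ j (x₀ + δ • (z - x₀))) - finMax hk₂ (fun j => ψ₂ j x₀)) / δ := by
        funext δ
        rw [hψ, hψ]
        ring
      unfold HasDirDeriv
      rw [heq]
      exact h1.sub h2
    have hEq := tendsto_nhds_unique hL hD
    rw [hEq] at hL0
    have hle : ((Q₂ j) *ᵥ x₀ + q₂ j) ⬝ᵥ (z - x₀)
        ≤ (act₁ x₀).sup' (hne₁ x₀) (fun i => ((Q₁ i) *ᵥ x₀ + q₁ i) ⬝ᵥ (z - x₀)) := by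
      have := Finset.le_sup' (fun j => ((Q₂ j) *ᵥ x₀ + q₂ j) ⬝ᵥ (z - x₀)) hj
      linarith
    exact (Finset.le_sup'_iff _).1 hle
  have hinj : Set.InjOn (fun x => (act₁ x, act₂ x, actC x)) {x | DStat ψ X x} := by
    intro x hx y hy hfeq
    by_contra hne
    simp only [Set.mem_setOf_eq] at hx hy
    obtain ⟨hA1, hA2, hAC⟩ : act₁ x = act₁ y ∧ act₂ x = act₂ y ∧ actC x = actC y := by
      simpa [Prod.ext_iff] using hfeq
    set d : Fin n → ℝ := y - x with hd
    have hd0 : d ≠ 0 := sub_ne_zero.mpr (Ne.symm hne)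
    have hyeq : y = x + d := by rw [hd]; abel
    have hxX : x ∈ X := hx.1
    have hyX : y ∈ X := hy.1
    have hxc : ∀ l, Amat l ⬝ᵥ x ≤ b l := by rw [hXeq] at hxX; exact hxX
    have hyc : ∀ l, Amat l ⬝ᵥ y ≤ b l := by rw [hXeq] at hyX; exact hyX
    -- choose a small step size ε
    have heps : ∀ᶠ ε in 𝓝[>] (0:ℝ), (x - ε • d ∈ X ∧ y + ε • d ∈ X) := by
      have hforall : ∀ l : Fin m, ∀ᶠ ε in 𝓝[>] (0:ℝ),
          (Amat l ⬝ᵥ (x - ε • d) ≤ b l ∧ Amat l ⬝ᵥ (y + ε • d) ≤ b l) := by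
        intro l
        have hdx : ∀ ε : ℝ, Amat l ⬝ᵥ (x - ε • d) = Amat l ⬝ᵥ x - ε * (Amat l ⬝ᵥ d) := by
          intro ε; simp [dotProduct_sub, dotProduct_smul, smul_eq_mul]
        have hdy : ∀ ε : ℝ, Amat l ⬝ᵥ (y + ε • d) = Amat l ⬝ᵥ y + ε * (Amat l ⬝ᵥ d) := by
          intro ε; simp [dotProduct_add, dotProduct_smul, smul_eq_mul]
        by_cases hcl : Amat l ⬝ᵥ x = b l
        · have hlC : l ∈ actC x := by simp [hactC, hcl]
          have hlCy : l ∈ actC y := hAC ▸ hlC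
          have hcly : Amat l ⬝ᵥ y = b l := by
            simpa [hactC] using hlCy
          have hdd : Amat l ⬝ᵥ d = 0 := by
            rw [hd]; simp [dotProduct_sub, hcl, hcly]
          refine Filter.Eventually.of_forall fun ε => ?_
          rw [hdx, hdy, hdd]
          simp [hcl, hcly]
        · have hltx : Amat l ⬝ᵥ x < b l := lt_of_le_of_ne (hxc l) hcl
          have hlCy : l ∉ actC y := by
            rw [← hAC]; simp [hactC, hcl]
          have hcly : Amat l ⬝ᵥ y ≠ b l := by
            intro h; exact hlCy (by simp [hactC, h])
          have hlty : Amat l ⬝ᵥ y < b l := lt_of_le_of_ne (hyc l) hcly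
          have ht1 : Filter.Tendsto (fun ε : ℝ => Amat l ⬝ᵥ x - ε * (Amat l ⬝ᵥ d))
              (𝓝[>] (0:ℝ)) (𝓝 (Amat l ⬝ᵥ x)) := by
            have hc : Continuous fun ε : ℝ => Amat l ⬝ᵥ x - ε * (Amat l ⬝ᵥ d) :=
              continuous_const.sub (continuous_id.mul continuous_const)
            have := (hc.tendsto 0).mono_left (nhdsWithin_le_nhds (s := Set.Ioi (0:ℝ)))
            simpa using this
          have ht2 : Filter.Tendsto (fun ε : ℝ => Amat l ⬝ᵥ y + ε * (Amat l ⬝ᵥ d))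
              (𝓝[>] (0:ℝ)) (𝓝 (Amat l ⬝ᵥ y)) := by
            have hc : Continuous fun ε : ℝ => Amat l ⬝ᵥ y + ε * (Amat l ⬝ᵥ d) :=
              continuous_const.add (continuous_id.mul continuous_const)
            have := (hc.tendsto 0).mono_left (nhdsWithin_le_nhds (s := Set.Ioi (0:ℝ)))
            simpa using this
          have he1 := ht1.eventually (eventually_lt_nhds hltx)
          have he2 := ht2.eventually (eventually_lt_nhds hlty)
          filter_upwards [he1, he2] with ε h1 h2
          rw [hdx, hdy]
          exact ⟨le_of_lt h1, le_of_lt h2⟩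
      rw [hXeq]
      have := (Filter.eventually_all (l := 𝓝[>] (0:ℝ))).2 hforall
      filter_upwards [this] with ε hε
      exact ⟨fun l => (hε l).1, fun l => (hε l).2⟩
    obtain ⟨ε, ⟨hxε, hyε⟩, hεpos⟩ := (heps.and eventually_mem_nhdsWithin).exists
    have hεpos' : (0:ℝ) < ε := hεpos
    obtain ⟨j₀, hj₀⟩ := hne₂ x
    have hj₀y : j₀ ∈ act₂ y := hA2 ▸ hj₀
    obtain ⟨i, hi, hineq1⟩ := key x hx (x - ε • d) hxε j₀ hj₀
    obtain ⟨i', hi', hineq2⟩ := key y hy (y + ε • d) hyε j₀ hj₀y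
    rw [sub_sub_cancel_left] at hineq1
    rw [add_sub_cancel_left] at hineq2
    -- turn the scaled inequalities into unit-direction inequalities
    have hs1 : ((Q₁ i) *ᵥ x + q₁ i) ⬝ᵥ d ≤ ((Q₂ j₀) *ᵥ x + q₂ j₀) ⬝ᵥ d := by
      have e1 : ∀ w : Fin n → ℝ, w ⬝ᵥ (-(ε • d)) = -(ε * (w ⬝ᵥ d)) := by
        intro w; simp [dotProduct_neg, dotProduct_smul, smul_eq_mul]
      rw [e1, e1] at hineq1
      have := neg_le_neg_iff.1 hineq1
      exact le_of_mul_le_mul_left this hεpos'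
    have hs2 : ((Q₂ j₀) *ᵥ y + q₂ j₀) ⬝ᵥ d ≤ ((Q₁ i') *ᵥ y + q₁ i') ⬝ᵥ d := by
      have e1 : ∀ w : Fin n → ℝ, w ⬝ᵥ (ε • d) = ε * (w ⬝ᵥ d) := by
        intro w; simp [dotProduct_smul, smul_eq_mul]
      rw [e1, e1] at hineq2
      exact le_of_mul_le_mul_left hineq2 hεpos'
    -- expansions along d
    have hexp2 : ∀ (Q : Matrix (Fin n) (Fin n) ℝ) (q : Fin n → ℝ),
        (Q *ᵥ y + q) ⬝ᵥ d = (Q *ᵥ x + q) ⬝ᵥ d + d ⬝ᵥ Q *ᵥ d := by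
      intro Q q
      rw [hyeq, Matrix.mulVec_add]
      simp only [add_dotProduct]
      rw [dotProduct_comm d (Q *ᵥ d)]
      ring
    have hval : ∀ i0 : Fin k₁, ψ₁ i0 y
        = ψ₁ i0 x + ((Q₁ i0 *ᵥ x + q₁ i0) ⬝ᵥ d) + (1/2) * (d ⬝ᵥ Q₁ i0 *ᵥ d) := by
      intro i0
      have h := quad_expand (hQ₁t i0) (q₁ i0) (α₁ i0) x d 1
      rw [show x + (1:ℝ) • d = y by rw [hyeq, one_smul]] at h
      rw [hψ₁, hψ₁, h]
      ring
    -- equality of active values at x and at y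
    have hvx : ψ₁ i x = ψ₁ i' x :=
      le_antisymm (((hmem₁ x i').1 (hA1.symm ▸ hi')) i) (((hmem₁ x i).1 hi) i')
    have hvy : ψ₁ i y = ψ₁ i' y :=
      le_antisymm (((hmem₁ y i').1 hi') i) (((hmem₁ y i).1 (hA1 ▸ hi)) i')
    have hci : d ⬝ᵥ Q₁ i *ᵥ d ≤ 0 := hC₁neg i d
    have hci' : d ⬝ᵥ Q₁ i' *ᵥ d ≤ 0 := hC₁neg i' d
    have hc₂ : 0 < d ⬝ᵥ Q₂ j₀ *ᵥ d := by
      have := (hQ₂ j₀).dotProduct_mulVec_pos hd0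
      simpa using this
    have hE2 := hexp2 (Q₂ j₀) (q₂ j₀)
    have hE1 := hexp2 (Q₁ i') (q₁ i')
    have hV := hval i
    have hV' := hval i'
    linarith
  exact Set.Finite.of_finite_image (Set.toFinite _) hinj
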